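/- Let T ∈ (0, ∞] and let (a,b,c) : [0,T) → ℝ³ be a differentiable solution of the gauged bracket Bach flow. Then for all t ∈ (0,T) one has a(t)² + b(t)² + c(t)² ≤ √6/√t. -/

import Mathlib

/-- First component of the right-hand side `F` of the gauged bracket Bach flow. -/
noncomputable def Fa (a b c : ℝ) : ℝ :=
  -(a / 48) * (44*a^4 + 72*a^2*b^2 - 5*a^2*c^2 + 28*b^4 + 24*b^2*c^2 - 4*c^4)

/-- Second component of the right-hand side `F` of the gauged bracket Bach flow. -/
noncomputable def Fb (a b c : ℝ) : ℝ :=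
  -(b / 48) * (60*a^4 + 104*a^2*b^2 + 57*a^2*c^2 + 44*b^4 + 104*b^2*c^2 + 60*c^4)

/-- Third component of the right-hand side `F` of the gauged bracket Bach flow. -/
noncomputable def Fc (a b c : ℝ) : ℝ :=
  -(c / 48) * (-4*a^4 + 24*a^2*b^2 - 5*a^2*c^2 + 28*b^4 + 72*b^2*c^2 + 44*c^4)

/-- `(a,b,c) : ℝ → ℝ³` is a differentiable solution of the gauged bracket Bach
flow on the set `S ⊆ ℝ`. -/
def IsBachFlowSolution (a b c : ℝ → ℝ) (S : Set ℝ) : Prop :=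
  ∀ t ∈ S,
    HasDerivAt a (Fa (a t) (b t) (c t)) t ∧
    HasDerivAt b (Fb (a t) (b t) (c t)) t ∧
    HasDerivAt c (Fc (a t) (b t) (c t)) t

lemma bach_key (a b c : ℝ) :
    2*(a * Fa a b c) + 2*(b * Fb a b c) + 2*(c * Fc a b c) ≤ -(a^2+b^2+c^2)^3/12 := by
  unfold Fa Fb Fc
  nlinarith [mul_nonneg (add_nonneg (sq_nonneg a) (sq_nonneg c)) (sq_nonneg (a^2 - c^2)),
    pow_nonneg (sq_nonneg a) 3, pow_nonneg (sq_nonneg b) 3, pow_nonneg (sq_nonneg c) 3,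
    mul_nonneg (pow_nonneg (sq_nonneg a) 2) (sq_nonneg b),
    mul_nonneg (pow_nonneg (sq_nonneg b) 2) (sq_nonneg a),
    mul_nonneg (pow_nonneg (sq_nonneg b) 2) (sq_nonneg c),
    mul_nonneg (pow_nonneg (sq_nonneg c) 2) (sq_nonneg b),
    sq_nonneg (a*b*c)]

/-- along a solution of the gauged bracket Bach flow on `[0,T)`
(with `T ∈ (0,∞]`), one has `a(t)² + b(t)² + c(t)² ≤ √6/√t` for all `t ∈ (0,T)`. -/
theorem norm_sq_decay (T : EReal) (hT : 0 < T) (a b c : ℝ → ℝ)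
    (hsol : IsBachFlowSolution a b c {t : ℝ | 0 ≤ t ∧ (t : EReal) < T}) :
    ∀ t : ℝ, 0 < t → (t : EReal) < T →
      a t ^ 2 + b t ^ 2 + c t ^ 2 ≤ Real.sqrt 6 / Real.sqrt t := by
  intro t ht htT
  set u : ℝ → ℝ := fun s => a s ^ 2 + b s ^ 2 + c s ^ 2 with hu_def
  have hu_nonneg : ∀ s, 0 ≤ u s := fun s => by positivity
  set D : ℝ → ℝ := fun s =>
    2*(a s * Fa (a s) (b s) (c s)) + 2*(b s * Fb (a s) (b s) (c s)) +
      2*(c s * Fc (a s) (b s) (c s)) with hD_def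
  have hmem : ∀ s ∈ Set.Icc (0:ℝ) t, s ∈ {t : ℝ | 0 ≤ t ∧ (t : EReal) < T} := by
    intro s hs
    exact ⟨hs.1, lt_of_le_of_lt (EReal.coe_le_coe_iff.mpr hs.2) htT⟩
  have hd : ∀ s ∈ Set.Icc (0:ℝ) t, HasDerivAt u (D s) s := by
    intro s hs
    obtain ⟨ha, hb, hc⟩ := hsol s (hmem s hs)
    have h := ((ha.pow 2).add (hb.pow 2)).add (hc.pow 2)
    convert h using 1
    · rfl
    · rfl
    · rfl
    push_cast
    ring
  have hDle : ∀ s, D s ≤ -(u s)^3/12 := fun s => bach_key (a s) (b s) (c s)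
  rw [show a t ^ 2 + b t ^ 2 + c t ^ 2 = u t from by rw [hu_def]]
  clear_value u
  clear_value D
  have hDle0 : ∀ s, D s ≤ 0 := by
    intro s
    have h1 := hDle s
    have h2 : 0 ≤ (u s)^3 := pow_nonneg (hu_nonneg s) 3
    linarith
  have hcont : ContinuousOn u (Set.Icc 0 t) :=
    fun s hs => ((hd s hs).continuousAt).continuousWithinAt
  have hanti : AntitoneOn u (Set.Icc 0 t) := by
    apply antitoneOn_of_deriv_nonpos (convex_Icc 0 t) hcont
    · intro s hs
      rw [interior_Icc] at hs
      exact (hd s (Set.mem_Icc_of_Ioo hs)).differentiableAt.differentiableWithinAt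
    · intro s hs
      rw [interior_Icc] at hs
      rw [(hd s (Set.mem_Icc_of_Ioo hs)).deriv]
      exact hDle0 s
  have rhs_nonneg : (0:ℝ) ≤ Real.sqrt 6 / Real.sqrt t :=
    div_nonneg (Real.sqrt_nonneg _) (Real.sqrt_nonneg _)
  rcases eq_or_lt_of_le (hu_nonneg t) with h0 | hut
  · calc u t = 0 := h0.symm
    _ ≤ _ := rhs_nonneg
  · -- u positive on [0,t]
    have upos : ∀ s ∈ Set.Icc (0:ℝ) t, 0 < u s := by
      intro s hs
      exact lt_of_lt_of_le hut (hanti hs (Set.right_mem_Icc.mpr ht.le) hs.2)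
    set ψ : ℝ → ℝ := fun s => (u s ^ 2)⁻¹ with hψ_def
    have hψd : ∀ s ∈ Set.Icc (0:ℝ) t,
        HasDerivAt ψ (-(2 * u s ^ 1 * D s) / (u s ^ 2) ^ 2) s := by
      intro s hs
      exact ((hd s hs).pow 2).inv (pow_pos (upos s hs) 2).ne'
    have hψd' : ∀ s ∈ Set.Icc (0:ℝ) t,
        (1:ℝ)/6 ≤ -(2 * u s ^ 1 * D s) / (u s ^ 2) ^ 2 := by
      intro s hs
      have hus := upos s hs
      rw [le_div_iff₀ (by positivity)]
      have h1 := hDle s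
      nlinarith [mul_le_mul_of_nonneg_left h1 (le_of_lt (mul_pos two_pos hus))]
    set χ : ℝ → ℝ := fun s => ψ s - s/6 with hχ_def
    have hχd : ∀ s ∈ Set.Icc (0:ℝ) t,
        HasDerivAt χ (-(2 * u s ^ 1 * D s) / (u s ^ 2) ^ 2 - 1/6) s := by
      intro s hs
      exact (hψd s hs).sub ((hasDerivAt_id s).div_const 6)
    have hmono : MonotoneOn χ (Set.Icc 0 t) := by
      apply monotoneOn_of_deriv_nonneg (convex_Icc 0 t)
      · exact fun s hs => ((hχd s hs).continuousAt).continuousWithinAt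
      · intro s hs
        rw [interior_Icc] at hs
        exact (hχd s (Set.mem_Icc_of_Ioo hs)).differentiableAt.differentiableWithinAt
      · intro s hs
        rw [interior_Icc] at hs
        have hs' := Set.mem_Icc_of_Ioo hs
        rw [(hχd s hs').deriv]
        linarith [hψd' s hs']
    have hχ01 : χ 0 ≤ χ t :=
      hmono (Set.left_mem_Icc.mpr ht.le) (Set.right_mem_Icc.mpr ht.le) ht.le
    have hψ0 : 0 < ψ 0 := by
      have h := upos 0 (Set.left_mem_Icc.mpr ht.le)
      simp only [hψ_def]
      positivity
    have hψt : t/6 ≤ ψ t := by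
      simp only [hχ_def] at hχ01
      linarith
    have h2 : u t ^ 2 ≤ 6 / t := by
      rw [le_div_iff₀ ht]
      have h3 := mul_le_mul_of_nonneg_left hψt (le_of_lt (pow_pos hut 2))
      rw [hψ_def, mul_inv_cancel₀ (ne_of_gt (pow_pos hut 2))] at h3
      nlinarith
    have h4 : u t ≤ Real.sqrt (6 / t) := by
      exact (Real.le_sqrt' hut).mpr h2
    calc u t ≤ Real.sqrt (6 / t) := h4
    _ = Real.sqrt 6 / Real.sqrt t := Real.sqrt_div (by norm_num) t
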